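/- Let Y_n ⊂ ℝ² be a Π_n-poised set and T a set of n + 2 distinct points, disjoint from Y_n, such that Y_{n+1} = Y_n ∪ T is Π_{n+1}-poised. Then the n + 2 polynomials h_t := ℓ_{t,Y_{n+1}}, t ∈ T, belong to Π_{n+1} ∩ I(Y_n), form a vector-space basis of Π_{n+1} ∩ I(Y_n), and form an H-basis of the ideal I(Y_n). -/

import Mathlib

open MvPolynomial

noncomputable section

abbrev Pt : Type := Fin 2 → ℝ
abbrev BPoly : Type := MvPolynomial (Fin 2) ℝ

/-- `Π_n`: the space of bivariate polynomials of total degree at most `n`. -/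
def PiLE (n : ℕ) : Submodule ℝ BPoly := MvPolynomial.restrictTotalDegree (Fin 2) ℝ n

/-- The vanishing ideal `I(Y)` of a set `Y ⊆ ℝ²`. -/
def vIdeal (Y : Set Pt) : Ideal BPoly where
  carrier := {p | ∀ y ∈ Y, eval y p = 0}
  add_mem' := by
    intro a b ha hb y hy
    simp [map_add, ha y hy, hb y hy]
  zero_mem' := by intro y hy; simp
  smul_mem' := by
    intro c a ha y hy
    simp [smul_eq_mul, ha y hy]

/-- `I(Y)` as an `ℝ`-subspace of `Π`. -/
def vSub (Y : Set Pt) : Submodule ℝ BPoly := (vIdeal Y).restrictScalars ℝ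

/-- `Y` is `Π_n`-poised: every interpolation problem on `Y` has a unique solution in `Π_n`. -/
def Poised (n : ℕ) (Y : Finset Pt) : Prop :=
  ∀ f : Pt → ℝ, ∃! p : BPoly, p ∈ PiLE n ∧ ∀ y ∈ Y, eval y p = f y

/-- `Y` is `Π_n`-independent: every interpolation problem on `Y` has a solution in `Π_n`. -/
def PIndep (n : ℕ) (Y : Finset Pt) : Prop :=
  ∀ f : Pt → ℝ, ∃ p ∈ PiLE n, ∀ y ∈ Y, eval y p = f y

/-- `ℓ y` is the fundamental (Lagrange) polynomial of `y ∈ Y` in `Π_n`. -/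
def IsFundamental (n : ℕ) (Y : Finset Pt) (ℓ : Pt → BPoly) : Prop :=
  ∀ y ∈ Y, ℓ y ∈ PiLE n ∧ ∀ y' ∈ Y, eval y' (ℓ y) = if y' = y then 1 else 0

/-- A finite family is an H-basis of the ideal `I`. -/
def IsHBasisFam {ι : Type} [Fintype ι] (I : Ideal BPoly) (h : ι → BPoly) : Prop :=
  (∀ i, h i ∈ I) ∧ ∀ f ∈ I, ∃ g : ι → BPoly,
    (∀ i, (g i).totalDegree ≤ f.totalDegree - (h i).totalDegree) ∧ f = ∑ i, g i * h i

/-- A finite set is an H-basis of the ideal `I`. -/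
def IsHBasisSet (I : Ideal BPoly) (H : Finset BPoly) : Prop :=
  (∀ p ∈ H, p ∈ I) ∧ ∀ f ∈ I, ∃ g : BPoly → BPoly,
    (∀ p ∈ H, (g p).totalDegree ≤ f.totalDegree - p.totalDegree) ∧ f = ∑ p ∈ H, g p * p

/-- `M` is a linear syzygy matrix for the family `h`. -/
def IsLinSyz (n : ℕ) (h : Fin (n + 2) → BPoly)
    (M : Matrix (Fin (n + 1)) (Fin (n + 2)) BPoly) : Prop :=
  (∀ i j, M i j ∈ PiLE 1) ∧ ∀ i, ∑ j, M i j * h j = 0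

/-- The rank of a polynomial matrix over the field of rational functions. -/
def ratRank {a b : ℕ} (M : Matrix (Fin a) (Fin b) BPoly) : ℕ :=
  (M.map (algebraMap BPoly (FractionRing BPoly))).rank



section Helpers

lemma deg2 (d : Fin 2 →₀ ℕ) : d.degree = d 0 + d 1 := by
  rw [Finsupp.degree, ← Fin.sum_univ_two d]
  exact Finset.sum_subset (Finset.subset_univ _) (by intro i _ h; simpa using h)

lemma sum2 (d : Fin 2 →₀ ℕ) : (d.sum fun _ e => e) = d 0 + d 1 := deg2 d

lemma tdeg_le {p : BPoly} {m : ℕ} (h : ∀ d : Fin 2 →₀ ℕ, coeff d p ≠ 0 → d 0 + d 1 ≤ m) :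
    p.totalDegree ≤ m := by
  apply Finset.sup_le
  intro d hd
  rw [sum2]
  exact h d (mem_support_iff.mp hd)

lemma coeff_zero_of_tdeg {p : BPoly} {d : Fin 2 →₀ ℕ} (h : p.totalDegree < d 0 + d 1) :
    coeff d p = 0 := by
  by_contra hc
  exact absurd ((sum2 d) ▸ le_totalDegree (mem_support_iff.mpr hc)) (not_le.mpr h)

/-- removing the top homogeneous component lowers degree -/
lemma trunc {p : BPoly} {k : ℕ} (h : p.totalDegree ≤ k + 1) :
    (p - homogeneousComponent (k+1) p).totalDegree ≤ k := by
  apply tdeg_le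
  intro d hd
  by_contra hk
  push_neg at hk
  rw [coeff_sub, coeff_homogeneousComponent, deg2] at hd
  rcases eq_or_ne (d 0 + d 1) (k+1) with he | he
  · simp [he] at hd
  · have : k + 1 < d 0 + d 1 := by omega
    rw [if_neg he, sub_zero] at hd
    exact hd (coeff_zero_of_tdeg (lt_of_le_of_lt h this))

/-- the exponent pattern `x^k y^(n+1-k)` -/
def dd (n : ℕ) (k : Fin (n+2)) : Fin 2 →₀ ℕ :=
  Finsupp.single 0 (k:ℕ) + Finsupp.single 1 (n+1-k)

lemma dd_apply0 (n : ℕ) (k : Fin (n+2)) : dd n k 0 = (k:ℕ) := by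
  simp [dd, Finsupp.single_apply]

lemma dd_apply1 (n : ℕ) (k : Fin (n+2)) : dd n k 1 = n+1-(k:ℕ) := by
  simp [dd, Finsupp.single_apply]

lemma dd_eq (n : ℕ) (d : Fin 2 →₀ ℕ) (h : d 0 + d 1 = n + 1) :
    d = dd n ⟨d 0, by omega⟩ := by
  ext i
  match i with
  | 0 => simp [dd_apply0]
  | 1 => rw [dd_apply1]; simp only []; omega

lemma homogKill (n : ℕ) {p : BPoly} (hp : p.IsHomogeneous (n+1))
    (h : ∀ k : Fin (n+2), coeff (dd n k) p = 0) : p = 0 := by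
  ext d
  rw [coeff_zero]
  by_contra hc
  have hd : d 0 + d 1 = n + 1 := by
    have := hp hc
    change Finsupp.weight (fun _ => 1) d = _ at this
    rw [← Finsupp.degree_eq_weight_one, deg2] at this
    exact this
  exact hc (dd_eq n d hd ▸ h ⟨d 0, by omega⟩)

/-- polynomials expressible as `∑ q i * hh i` with `deg (q i) ≤ k` -/
def GoodSub {ι : Type} [Fintype ι] (hh : ι → BPoly) (k : ℕ) : Submodule ℝ BPoly where
  carrier := {F | ∃ q : ι → BPoly, (∀ i, (q i).totalDegree ≤ k) ∧ F = ∑ i, q i * hh i}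
  zero_mem' := ⟨0, by simp, by simp⟩
  add_mem' := by
    rintro a b ⟨q, hq, rfl⟩ ⟨r, hr, rfl⟩
    refine ⟨q + r, fun i => ?_, ?_⟩
    · exact le_trans (totalDegree_add _ _) (max_le (hq i) (hr i))
    · simp [add_mul, Finset.sum_add_distrib]
  smul_mem' := by
    rintro c a ⟨q, hq, rfl⟩
    refine ⟨fun i => c • q i, fun i => le_trans (totalDegree_smul_le _ _) (hq i), ?_⟩
    rw [Finset.smul_sum]
    exact Finset.sum_congr rfl fun i _ => (smul_mul_assoc c (q i) (hh i)).symm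

lemma totalDegree_monomial_le' (e : Fin 2 →₀ ℕ) (r : ℝ) :
    (monomial e r : BPoly).totalDegree ≤ e 0 + e 1 := by
  rcases eq_or_ne r 0 with rfl | hr
  · simp
  · rw [totalDegree_monomial e hr, sum2]

lemma monomial_mem_good {ι : Type} [Fintype ι] (n : ℕ) (hh : ι → BPoly)
    (Hspan : ∀ k : Fin (n+2), ∃ c : ι → ℝ, (monomial (dd n k) (1:ℝ) : BPoly) = ∑ i, c i • hh i)
    {d : Fin 2 →₀ ℕ} (r : ℝ) (hd : n + 1 ≤ d 0 + d 1) :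
    (monomial d r : BPoly) ∈ GoodSub hh (d 0 + d 1 - (n+1)) := by
  set a := min (d 0) (n+1) with ha
  have hale : a ≤ n + 1 := min_le_right _ _
  set k : Fin (n+2) := ⟨a, by omega⟩ with hk
  have hs0 : dd n k 0 = a := dd_apply0 n k
  have hs1 : dd n k 1 = n + 1 - a := dd_apply1 n k
  have hse : dd n k ≤ d := by
    rw [Finsupp.le_def]
    intro i
    match i with
    | 0 => rw [hs0]; exact min_le_left _ _
    | 1 => rw [hs1]; omega
  set e := d - dd n k with hee
  have he : e + dd n k = d := tsub_add_cancel_of_le hse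
  have he0 : e 0 = d 0 - a := by rw [hee, Finsupp.tsub_apply, hs0]
  have he1 : e 1 = d 1 - (n + 1 - a) := by rw [hee, Finsupp.tsub_apply, hs1]
  have hesum : e 0 + e 1 = d 0 + d 1 - (n+1) := by
    have h0 := hse 0; have h1 := hse 1
    rw [hs0] at h0; rw [hs1] at h1
    omega
  obtain ⟨c, hc⟩ := Hspan k
  refine ⟨fun i => c i • monomial e r, fun i => ?_, ?_⟩
  · exact le_trans (totalDegree_smul_le _ _) (hesum ▸ totalDegree_monomial_le' e r)
  · calc (monomial d r : BPoly) = monomial e r * monomial (dd n k) 1 := by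
          rw [monomial_mul, mul_one, he]
      _ = monomial e r * ∑ i, c i • hh i := by rw [hc]
      _ = ∑ i, (c i • monomial e r) * hh i := by
          rw [Finset.mul_sum]
          exact Finset.sum_congr rfl fun i _ => by rw [mul_smul_comm, smul_mul_assoc]

lemma homog_mem_good {ι : Type} [Fintype ι] (n : ℕ) (hh : ι → BPoly)
    (Hspan : ∀ k : Fin (n+2), ∃ c : ι → ℝ, (monomial (dd n k) (1:ℝ) : BPoly) = ∑ i, c i • hh i)
    {p : BPoly} {m : ℕ} (hm : n + 1 ≤ m) (hp : p.IsHomogeneous m) :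
    p ∈ GoodSub hh (m - (n+1)) := by
  rw [← support_sum_monomial_coeff p]
  apply Submodule.sum_mem
  intro d hd
  have hdm : d 0 + d 1 = m := by
    have := hp (mem_support_iff.mp hd)
    change Finsupp.weight (fun _ => 1) d = _ at this
    rw [← Finsupp.degree_eq_weight_one, deg2] at this
    exact this
  exact hdm ▸ monomial_mem_good n hh Hspan _ (hdm ▸ hm)

lemma poised_unique {m : ℕ} {Z : Finset Pt} (hZ : Poised m Z) {p q : BPoly}
    (hp : p ∈ PiLE m) (hq : q ∈ PiLE m) (h : ∀ z ∈ Z, eval z p = eval z q) : p = q := by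
  obtain ⟨r, _, hu⟩ := hZ (fun z => eval z p)
  exact (hu p ⟨hp, fun _ _ => rfl⟩).trans (hu q ⟨hq, fun z hz => (h z hz).symm⟩).symm

lemma eval_smul' (z : Pt) (c : ℝ) (p : BPoly) : eval z (c • p) = c * eval z p := by
  rw [smul_eq_C_mul, map_mul, eval_C]

end Helpers

set_option maxHeartbeats 1000000

/-- If `Y_n` is `Π_n`-poised, `T` is a set of `n+2` points
disjoint from `Y_n` with `Y_{n+1} = Y_n ∪ T` `Π_{n+1}`-poised, then the
polynomials `h_t := ℓ_{t,Y_{n+1}}`, `t ∈ T`, lie in `Π_{n+1} ∩ I(Y_n)`, form a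
vector-space basis of `Π_{n+1} ∩ I(Y_n)`, and form an H-basis of `I(Y_n)`. -/
theorem stmt11 (n : ℕ) (Y T : Finset Pt)
    (hY : Poised n Y)
    (hTcard : T.card = n + 2)
    (hdisj : Disjoint Y T)
    (hY1 : Poised (n + 1) (Y ∪ T))
    (L : Pt → BPoly)
    (hL : IsFundamental (n + 1) (Y ∪ T) L) :
    (∀ t ∈ T, L t ∈ PiLE (n + 1) ⊓ vSub (Y : Set Pt)) ∧
    LinearIndependent ℝ (fun t : {x // x ∈ T} => L t) ∧
    Submodule.span ℝ (L '' (T : Set Pt)) = PiLE (n + 1) ⊓ vSub (Y : Set Pt) ∧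
    IsHBasisFam (vIdeal (Y : Set Pt)) (fun t : {x // x ∈ T} => L t) := by
  classical
  have hmem : ∀ t ∈ T, L t ∈ PiLE (n+1) := fun t ht => (hL t (Finset.mem_union_right Y ht)).1
  have hdel : ∀ t ∈ T, ∀ z ∈ Y ∪ T, eval z (L t) = if z = t then 1 else 0 :=
    fun t ht => (hL t (Finset.mem_union_right Y ht)).2
  have hvan : ∀ t ∈ T, ∀ y ∈ Y, eval y (L t) = 0 := by
    intro t ht y hy
    rw [hdel t ht y (Finset.mem_union_left T hy), if_neg]
    exact fun h => (Finset.disjoint_left.mp hdisj hy) (h ▸ ht)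
  have vanish : ∀ p : BPoly, p ∈ PiLE n → (∀ y ∈ Y, eval y p = 0) → p = 0 := by
    intro p hp h
    exact poised_unique hY hp (Submodule.zero_mem _) (by simpa using h)
  have evalYsum : ∀ (c : {x // x ∈ T} → ℝ), ∀ y ∈ Y, eval y (∑ i, c i • L ↑i) = 0 := by
    intro c y hy
    rw [map_sum]
    refine Finset.sum_eq_zero fun i _ => ?_
    rw [eval_smul', hvan ↑i i.2 y hy, mul_zero]
  have evalTsum : ∀ (c : {x // x ∈ T} → ℝ) (t : Pt) (ht : t ∈ T),
      eval t (∑ i, c i • L ↑i) = c ⟨t, ht⟩ := by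
    intro c t ht
    rw [map_sum]
    rw [Finset.sum_eq_single_of_mem (⟨t, ht⟩ : {x // x ∈ T}) (Finset.mem_univ _)]
    · rw [eval_smul', hdel t ht t (Finset.mem_union_right Y ht), if_pos rfl, mul_one]
    · intro i _ hne
      rw [eval_smul', hdel ↑i i.2 t (Finset.mem_union_right Y ht), if_neg, mul_zero]
      exact fun h => hne (Subtype.ext h.symm)
  have part1 : ∀ t ∈ T, L t ∈ PiLE (n + 1) ⊓ vSub (Y : Set Pt) := by
    intro t ht
    refine Submodule.mem_inf.mpr ⟨hmem t ht, ?_⟩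
    exact fun y hy => hvan t ht y (Finset.mem_coe.mp hy)
  have partLI : LinearIndependent ℝ (fun t : {x // x ∈ T} => L ↑t) := by
    rw [Fintype.linearIndependent_iff]
    intro g hg i
    have h1 := evalTsum g ↑i i.2
    rw [hg, map_zero] at h1
    simpa using h1.symm
  have rep : ∀ p : BPoly, p ∈ PiLE (n+1) → (∀ y ∈ Y, eval y p = 0) →
      p = ∑ i : {x // x ∈ T}, eval (↑i) p • L ↑i := by
    intro p hp hpv
    refine poised_unique hY1 hp ?_ ?_
    · exact Submodule.sum_mem _ fun i _ => Submodule.smul_mem _ _ (hmem ↑i i.2)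
    · intro z hz
      rcases Finset.mem_union.mp hz with h | h
      · rw [hpv z h, evalYsum _ z h]
      · rw [evalTsum _ z h]
  have part3 : Submodule.span ℝ (L '' (T : Set Pt)) = PiLE (n + 1) ⊓ vSub (Y : Set Pt) := by
    apply le_antisymm
    · rw [Submodule.span_le]
      rintro x ⟨t, ht, rfl⟩
      exact part1 t ht
    · intro p hp
      obtain ⟨hp1, hp2⟩ := Submodule.mem_inf.mp hp
      have hp2' : ∀ y ∈ Y, eval y p = 0 := fun y hy => hp2 y (Finset.mem_coe.mpr hy)
      rw [rep p hp1 hp2']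
      exact Submodule.sum_mem _ fun i _ => Submodule.smul_mem _ _
        (Submodule.subset_span ⟨↑i, by simpa using i.2, rfl⟩)
  have hdegL : ∀ i : {x // x ∈ T}, (L ↑i).totalDegree = n + 1 := by
    intro i
    have hle : (L ↑i).totalDegree ≤ n + 1 :=
      (mem_restrictTotalDegree _ _ _).mp (hmem ↑i i.2)
    by_contra hne
    have hn : (L ↑i).totalDegree ≤ n := by omega
    have h0 : L ↑i = 0 := vanish _ ((mem_restrictTotalDegree _ _ _).mpr hn) (hvan ↑i i.2)
    have h1 := hdel ↑i i.2 ↑i (Finset.mem_union_right Y i.2)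
    rw [h0, if_pos rfl] at h1
    simpa using h1
  set hh : {x // x ∈ T} → BPoly := fun i => homogeneousComponent (n+1) (L ↑i) with hhdef
  have hLhh : ∀ i : {x // x ∈ T}, (L ↑i - hh i).totalDegree ≤ n :=
    fun i => trunc ((mem_restrictTotalDegree _ _ _).mp (hmem ↑i i.2))
  have hhHom : ∀ i : {x // x ∈ T}, (hh i).IsHomogeneous (n+1) :=
    fun i => homogeneousComponent_isHomogeneous _ _
  set ε : BPoly →ₗ[ℝ] (Fin (n+2) → ℝ) := LinearMap.pi (fun k => lcoeff ℝ (dd n k)) with hε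
  have εapp : ∀ (p : BPoly) (k : Fin (n+2)), ε p k = coeff (dd n k) p := fun p k => rfl
  have εker : ∀ p : BPoly, p.IsHomogeneous (n+1) → ε p = 0 → p = 0 := by
    intro p hp h
    refine homogKill n hp (fun k => ?_)
    rw [← εapp, h]
    rfl
  have homsum : ∀ (c : {x // x ∈ T} → ℝ),
      (∑ i, c i • hh i).IsHomogeneous (n+1) := by
    intro c
    rw [← mem_homogeneousSubmodule]
    exact Submodule.sum_mem _ fun i _ =>
      Submodule.smul_mem _ _ ((mem_homogeneousSubmodule _ _).mpr (hhHom i))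
  have LIε : LinearIndependent ℝ (fun i : {x // x ∈ T} => ε (hh i)) := by
    rw [Fintype.linearIndependent_iff]
    intro g hg
    have h1 : ε (∑ i, g i • hh i) = 0 := by
      rw [map_sum]
      simpa [map_smul] using hg
    have h3 : ∑ i, g i • hh i = 0 := εker _ (homsum g) h1
    have h4 : homogeneousComponent (n+1) (∑ i, g i • L ↑i) = 0 := by
      rw [map_sum]
      simp_rw [map_smul]
      exact h3
    have hdsum : (∑ i, g i • L ↑i).totalDegree ≤ n + 1 := by
      refine le_trans (totalDegree_finset_sum _ _) (Finset.sup_le fun i _ => ?_)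
      exact le_trans (totalDegree_smul_le _ _)
        ((mem_restrictTotalDegree _ _ _).mp (hmem ↑i i.2))
    have h5 : (∑ i, g i • L ↑i).totalDegree ≤ n := by
      have ht := trunc (k := n) hdsum
      rwa [h4, sub_zero] at ht
    have h6 : (∑ i, g i • L ↑i) = 0 :=
      vanish _ ((mem_restrictTotalDegree _ _ _).mpr h5) (evalYsum g)
    exact Fintype.linearIndependent_iff.mp partLI g h6
  have cardι : Fintype.card {x // x ∈ T} = n + 2 := by rw [Fintype.card_coe, hTcard]
  have hne : Nonempty {x // x ∈ T} := by
    rw [← Fintype.card_pos_iff, cardι]; omega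
  have spanε : Submodule.span ℝ (Set.range fun i : {x // x ∈ T} => ε (hh i)) = ⊤ :=
    LIε.span_eq_top_of_card_eq_finrank (by rw [cardι, Module.finrank_fin_fun])
  have Hspan : ∀ k : Fin (n+2), ∃ c : {x // x ∈ T} → ℝ,
      (monomial (dd n k) (1:ℝ) : BPoly) = ∑ i, c i • hh i := by
    intro k
    have hmem' : ε (monomial (dd n k) 1) ∈
        Submodule.span ℝ (Set.range fun i : {x // x ∈ T} => ε (hh i)) := by
      rw [spanε]; trivial
    obtain ⟨c, hc⟩ := Submodule.mem_span_range_iff_exists_fun ℝ |>.mp hmem'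
    refine ⟨c, ?_⟩
    have hdm : (dd n k).degree = n + 1 := by
      rw [deg2, dd_apply0, dd_apply1]
      have := k.isLt
      omega
    have hhom : ((monomial (dd n k) (1:ℝ) : BPoly) - ∑ i, c i • hh i).IsHomogeneous (n+1) :=
      (isHomogeneous_monomial _ hdm).sub (homsum c)
    have hεsum : ε (∑ i, c i • hh i) = ∑ i, c i • ε (hh i) := by
      rw [map_sum]; simp_rw [map_smul]
    have hez : ε ((monomial (dd n k) (1:ℝ) : BPoly) - ∑ i, c i • hh i) = 0 := by
      rw [map_sub, hεsum, hc, sub_self]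
    exact sub_eq_zero.mp (εker _ hhom hez)
  have main : ∀ m : ℕ, ∀ f : BPoly, (∀ y ∈ Y, eval y f = 0) → f.totalDegree ≤ m →
      ∃ g : {x // x ∈ T} → BPoly,
        (∀ i, (g i).totalDegree ≤ m - (n+1)) ∧ f = ∑ i, g i * L ↑i := by
    intro m
    induction m using Nat.strong_induction_on with
    | _ m IH =>
      intro f hf hdeg
      by_cases hm1 : m ≤ n
      · have hf0 : f = 0 := vanish f ((mem_restrictTotalDegree _ _ _).mpr (hdeg.trans hm1)) hf
        exact ⟨0, by simp, by simp [hf0]⟩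
      · by_cases hm2 : m ≤ n + 1
        · have hfP : f ∈ PiLE (n+1) := (mem_restrictTotalDegree _ _ _).mpr (hdeg.trans hm2)
          refine ⟨fun i => C (eval ↑i f), fun i => by simp, ?_⟩
          calc f = ∑ i : {x // x ∈ T}, eval ↑i f • L ↑i := rep f hfP hf
            _ = ∑ i : {x // x ∈ T}, C (eval ↑i f) * L ↑i := by simp_rw [smul_eq_C_mul]
        · have hm : n + 2 ≤ m := by omega
          obtain ⟨q, hq, hFq⟩ := homog_mem_good n hh Hspan (m := m) (by omega)
            (homogeneousComponent_isHomogeneous m f)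
          set f' := f - ∑ i, q i * L ↑i with hf'def
          have hf'v : ∀ y ∈ Y, eval y f' = 0 := by
            intro y hy
            rw [hf'def, map_sub, hf y hy, map_sum, zero_sub, neg_eq_zero]
            exact Finset.sum_eq_zero fun i _ => by rw [map_mul, hvan ↑i i.2 y hy, mul_zero]
          have hf'deg : f'.totalDegree ≤ m - 1 := by
            have hsplit : ∑ i, q i * (L ↑i - hh i) = (∑ i, q i * L ↑i) - ∑ i, q i * hh i := by
              rw [← Finset.sum_sub_distrib]
              exact Finset.sum_congr rfl fun i _ => by ring
            have heq : f' = (f - homogeneousComponent m f) - ∑ i, q i * (L ↑i - hh i) := by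
              rw [hf'def, hsplit, ← hFq]
              ring
            rw [heq]
            have hmm : m - 1 + 1 = m := by omega
            have h1 : (f - homogeneousComponent m f).totalDegree ≤ m - 1 := by
              have := trunc (k := m - 1) (p := f) (by omega)
              rwa [hmm] at this
            have h2 : (∑ i, q i * (L ↑i - hh i)).totalDegree ≤ m - 1 := by
              refine le_trans (totalDegree_finset_sum _ _) (Finset.sup_le fun i _ => ?_)
              refine le_trans (totalDegree_mul _ _) ?_
              have hqi := hq i
              have hLi := hLhh i
              omega
            refine le_trans ?_ (max_le h1 h2)
            rw [sub_eq_add_neg]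
            exact le_trans (totalDegree_add _ _) (by rw [totalDegree_neg])
          obtain ⟨g', hg', hrep⟩ := IH (m-1) (by omega) f' hf'v hf'deg
          refine ⟨fun i => g' i + q i, fun i => ?_, ?_⟩
          · refine le_trans (totalDegree_add _ _) (max_le ?_ ?_)
            · exact (hg' i).trans (by omega)
            · exact (hq i).trans (by omega)
          · have hfe : f = f' + ∑ i, q i * L ↑i := by rw [hf'def]; ring
            rw [hfe, hrep, ← Finset.sum_add_distrib]
            exact Finset.sum_congr rfl fun i _ => by ring
  refine ⟨part1, partLI, part3, ?_, ?_⟩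
  · intro i
    exact fun y hy => hvan ↑i i.2 y (Finset.mem_coe.mp hy)
  · intro f hf
    obtain ⟨g, hg, hrep⟩ := main f.totalDegree f
      (fun y hy => hf y (Finset.mem_coe.mpr hy)) le_rfl
    refine ⟨g, fun i => ?_, hrep⟩
    rw [hdegL i]
    exact hg i
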